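/- arXiv:1706.09233 — 2 statements merged into one kernel-verified Lean document; each statement's English description precedes it below -/
import Mathlib

section
/- Let φ : ℝ × ℝ → ℝ be a continuous function that is symmetric in both its first and its second argument (φ(−x,u) = φ(x,u) and φ(x,−u) = φ(x,u)), such that the kernel ((x₁,u₁),(x₂,u₂)) ↦ φ(x₁ − x₂, u₁ − u₂) is positive definite on ℝ × ℝ, and such that φ(x,u) = 0 whenever |x| ≥ π, for all u ∈ ℝ. Let ψ be the restriction of φ to [0,π] × ℝ in the first argument. Then ψ is a geodesically isotropic, temporally symmetric covariance function on the circle 𝕊¹ cross time; that is, the kernel ((s₁,t₁),(s₂,t₂)) ↦ ψ(d_GC(s₁,s₂), t₁ − t₂) is positive definite on 𝕊¹ × ℝ. -/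
open scoped RealInnerProductSpace

noncomputable def gcDist {n : ℕ} (x y : EuclideanSpace ℝ (Fin n)) : ℝ :=
  Real.arccos ⟪x, y⟫

def IsPosDefKernel {X : Type*} (K : X → X → ℝ) : Prop :=
  ∀ (N : ℕ) (x : Fin N → X) (c : Fin N → ℝ),
    0 ≤ ∑ i : Fin N, ∑ j : Fin N, c i * c j * K (x i) (x j)

open Real

private theorem sphere_angle (s : EuclideanSpace ℝ (Fin 2)) (hs : ‖s‖ = 1) :
    ∃ θ : ℝ, |θ| ≤ π ∧ s 0 = Real.cos θ ∧ s 1 = Real.sin θ := by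
  have h : (s 0)^2 + (s 1)^2 = 1 := by
    rw [EuclideanSpace.norm_eq, Real.sqrt_eq_one] at hs
    simpa [Fin.sum_univ_two, sq_abs] using hs
  have h0 : -1 ≤ s 0 ∧ s 0 ≤ 1 := by constructor <;> nlinarith
  refine ⟨if 0 ≤ s 1 then Real.arccos (s 0) else -Real.arccos (s 0), ?_, ?_, ?_⟩
  · split <;> rw [abs_le] <;>
      constructor <;> nlinarith [Real.arccos_nonneg (s 0), Real.arccos_le_pi (s 0), Real.pi_pos]
  · split <;> simp [Real.cos_arccos h0.1 h0.2]
  · rcases le_or_gt 0 (s 1) with hy | hy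
    · rw [if_pos hy, Real.sin_arccos]
      rw [show 1 - s 0 ^ 2 = (s 1)^2 by nlinarith, Real.sqrt_sq hy]
    · rw [if_neg (not_le.mpr hy), Real.sin_neg, Real.sin_arccos]
      rw [show 1 - s 0 ^ 2 = (s 1)^2 by nlinarith, Real.sqrt_sq_eq_abs, abs_of_neg hy]
      ring

private theorem fold_lem (φ : ℝ → ℝ → ℝ)
    (hsymm1 : ∀ x u : ℝ, φ (-x) u = φ x u)
    (hsupp : ∀ x u : ℝ, Real.pi ≤ |x| → φ x u = 0) :
    ∀ d u : ℝ, |d| ≤ 2 * π →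
    φ (Real.arccos (Real.cos d)) u = φ d u + φ (d + 2*π) u + φ (d - 2*π) u := by
  have hpi := Real.pi_pos
  have key : ∀ d u : ℝ, 0 ≤ d → d ≤ 2 * π →
      φ (Real.arccos (Real.cos d)) u = φ d u + φ (d + 2*π) u + φ (d - 2*π) u := by
    intro d u h0 h2
    rcases le_or_gt d π with h1 | h1
    · rw [Real.arccos_cos h0 h1,
          hsupp (d + 2*π) u (by rw [abs_of_nonneg] <;> linarith),
          hsupp (d - 2*π) u (by rw [abs_of_nonpos] <;> linarith)]
      ring
    · have : Real.cos d = Real.cos (2*π - d) := by rw [Real.cos_sub]; simp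
      rw [this, Real.arccos_cos (by linarith) (by linarith),
          hsupp d u (by rw [abs_of_nonneg] <;> linarith),
          hsupp (d + 2*π) u (by rw [abs_of_nonneg] <;> linarith),
          show (2*π - d) = -(d - 2*π) by ring, hsymm1]
      ring
  intro d u hd
  obtain ⟨ha, hb⟩ := abs_le.mp hd
  rcases le_or_gt 0 d with h0 | h0
  · exact key d u h0 hb
  · have := key (-d) u (by linarith) (by linarith)
    rw [Real.cos_neg] at this
    rw [this, hsymm1, show (-d + 2*π) = -(d - 2*π) by ring, hsymm1,
        show (-d - 2*π) = -(d + 2*π) by ring, hsymm1]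
    ring

private theorem row_lem (g : ℤ → ℝ) (hg : ∀ k : ℤ, 2 ≤ |k| → g k = 0) (n : ℕ) (hn : 0 < n) :
    ∑ m : Fin n, g ((m : ℤ) - (n : ℤ)) = g (-1) := by
  rw [Finset.sum_eq_single (⟨n - 1, by omega⟩ : Fin n)]
  · congr 1
    simp only [Fin.val_mk]
    omega
  · intro b _ hb
    apply hg
    have h1 := b.isLt
    have h2 : (b : ℕ) ≠ n - 1 := fun h => hb (Fin.ext h)
    refine le_abs.mpr (Or.inr ?_)
    omega
  · exact fun h => absurd (Finset.mem_univ _) h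

private theorem col_lem (g : ℤ → ℝ) (hg : ∀ k : ℤ, 2 ≤ |k| → g k = 0) (n : ℕ) (hn : 0 < n) :
    ∑ m : Fin n, g ((n : ℤ) - (m : ℤ)) = g 1 := by
  rw [Finset.sum_eq_single (⟨n - 1, by omega⟩ : Fin n)]
  · congr 1
    simp only [Fin.val_mk]
    omega
  · intro b _ hb
    apply hg
    have h1 := b.isLt
    have h2 : (b : ℕ) ≠ n - 1 := fun h => hb (Fin.ext h)
    refine le_abs.mpr (Or.inl ?_)
    omega
  · exact fun h => absurd (Finset.mem_univ _) h

private theorem count_lem (g : ℤ → ℝ) (hg : ∀ k : ℤ, 2 ≤ |k| → g k = 0) :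
    ∀ M : ℕ, ∑ m : Fin M, ∑ m' : Fin M, g ((m : ℤ) - (m' : ℤ)) =
      (M : ℝ) * g 0 + ((M - 1 : ℕ) : ℝ) * (g 1 + g (-1)) := by
  intro M
  induction M with
  | zero => simp
  | succ n ih =>
    have hrw : ∀ a : ℤ, ∑ m' : Fin (n+1), g (a - (m' : ℤ)) =
        ∑ m' : Fin n, g (a - (m' : ℤ)) + g (a - (n : ℤ)) := by
      intro a
      rw [Fin.sum_univ_castSucc]
      simp [Fin.coe_castSucc, Fin.val_last]
    rw [Fin.sum_univ_castSucc]
    simp only [hrw, Fin.coe_castSucc, Fin.val_last]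
    rw [Finset.sum_add_distrib, ih]
    rcases Nat.eq_zero_or_pos n with h0 | h0
    · subst h0; simp
    · rw [row_lem g hg n h0, col_lem g hg n h0]
      push_cast [Nat.cast_sub h0]
      simp only [sub_self]
      ring

/-- A continuous, componentwise symmetric, positive definite function on `ℝ × ℝ`
vanishing for `|x| ≥ π` restricts to a geodesically isotropic, temporally symmetric
covariance function on the circle `𝕊¹` cross time. -/
theorem restriction_posdef_circle_time
    (φ : ℝ → ℝ → ℝ) (hcont : Continuous (Function.uncurry φ))
    (hsymm1 : ∀ x u : ℝ, φ (-x) u = φ x u)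
    (hsymm2 : ∀ x u : ℝ, φ x (-u) = φ x u)
    (hpd : IsPosDefKernel (fun p q : ℝ × ℝ => φ (p.1 - q.1) (p.2 - q.2)))
    (hsupp : ∀ x u : ℝ, Real.pi ≤ |x| → φ x u = 0) :
    IsPosDefKernel (fun p q : Metric.sphere (0 : EuclideanSpace ℝ (Fin 2)) 1 × ℝ =>
      φ (gcDist (p.1 : EuclideanSpace ℝ (Fin 2)) (q.1 : EuclideanSpace ℝ (Fin 2)))
        (p.2 - q.2)) := by
  have hpi := Real.pi_pos
  intro N p c
  -- choose angles for the sphere points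
  have hang : ∀ i : Fin N, ∃ θ : ℝ, |θ| ≤ π ∧
      ((p i).1 : EuclideanSpace ℝ (Fin 2)) 0 = Real.cos θ ∧
      ((p i).1 : EuclideanSpace ℝ (Fin 2)) 1 = Real.sin θ := by
    intro i
    exact sphere_angle _ (by simpa using mem_sphere_zero_iff_norm.mp (p i).1.2)
  choose θ hθ hcos hsin using hang
  set t : Fin N → ℝ := fun i => (p i).2 with ht
  -- the great-circle distance in terms of angles
  have hgc : ∀ i j : Fin N, gcDist ((p i).1 : EuclideanSpace ℝ (Fin 2))
      ((p j).1 : EuclideanSpace ℝ (Fin 2)) = Real.arccos (Real.cos (θ i - θ j)) := by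
    intro i j
    unfold gcDist
    congr 1
    have hin : ⟪((p i).1 : EuclideanSpace ℝ (Fin 2)), ((p j).1 : EuclideanSpace ℝ (Fin 2))⟫ =
        ((p i).1 : EuclideanSpace ℝ (Fin 2)) 0 * ((p j).1 : EuclideanSpace ℝ (Fin 2)) 0 +
        ((p i).1 : EuclideanSpace ℝ (Fin 2)) 1 * ((p j).1 : EuclideanSpace ℝ (Fin 2)) 1 := by
      simp [PiLp.inner_apply, Fin.sum_univ_two, RCLike.inner_apply]
      ring
    rw [hin, hcos i, hsin i, hcos j, hsin j, Real.cos_sub]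
  have hd2 : ∀ i j : Fin N, |θ i - θ j| ≤ 2 * π := by
    intro i j
    calc |θ i - θ j| ≤ |θ i| + |θ j| := abs_sub _ _
    _ ≤ 2 * π := by linarith [hθ i, hθ j]
  -- the two pieces
  set S0 : ℝ := ∑ i : Fin N, ∑ j : Fin N, c i * c j * φ (θ i - θ j) (t i - t j) with hS0
  set S1 : ℝ := ∑ i : Fin N, ∑ j : Fin N, c i * c j *
      (φ (θ i - θ j + 2*π) (t i - t j) + φ (θ i - θ j - 2*π) (t i - t j)) with hS1
  -- the goal sum equals S0 + S1
  have hsum : (∑ i : Fin N, ∑ j : Fin N, c i * c j *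
      φ (gcDist ((p i).1 : EuclideanSpace ℝ (Fin 2)) ((p j).1 : EuclideanSpace ℝ (Fin 2)))
        ((p i).2 - (p j).2)) = S0 + S1 := by
    rw [hS0, hS1, ← Finset.sum_add_distrib]
    refine Finset.sum_congr rfl (fun i _ => ?_)
    rw [← Finset.sum_add_distrib]
    refine Finset.sum_congr rfl (fun j _ => ?_)
    rw [hgc i j, fold_lem φ hsymm1 hsupp (θ i - θ j) (t i - t j) (hd2 i j)]
    ring
  rw [hsum]
  -- vanishing of shifted terms
  have hg0 : ∀ i j : Fin N, ∀ k : ℤ, 2 ≤ |k| →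
      φ (θ i - θ j + 2*π*(k : ℝ)) (t i - t j) = 0 := by
    intro i j k hk
    apply hsupp
    have h4 : (2 : ℝ) ≤ |(k : ℝ)| := by rw [← Int.cast_abs]; exact_mod_cast hk
    have h5 : |2*π*(k : ℝ)| = 2*π*|(k : ℝ)| := by
      rw [abs_mul, abs_of_nonneg (by linarith : (0:ℝ) ≤ 2*π)]
    have h6 := abs_add_le (θ i - θ j + 2*π*(k : ℝ)) (-(θ i - θ j))
    rw [show θ i - θ j + 2*π*(k : ℝ) + -(θ i - θ j) = 2*π*(k : ℝ) by ring, abs_neg] at h6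
    have := hd2 i j
    nlinarith
  -- replication bound
  have hM : ∀ M : ℕ, 0 ≤ (M : ℝ) * S0 + ((M - 1 : ℕ) : ℝ) * S1 := by
    intro M
    set q : Fin N × Fin M → ℝ × ℝ := fun x => (θ x.1 + 2*π*((x.2 : ℕ) : ℝ), t x.1) with hq
    set cc : Fin N × Fin M → ℝ := fun x => c x.1 with hcc
    have h := hpd (N * M) (q ∘ finProdFinEquiv.symm) (cc ∘ finProdFinEquiv.symm)
    simp only [Function.comp_apply] at h
    have hconv : (∑ i : Fin (N * M), ∑ j : Fin (N * M),
        cc (finProdFinEquiv.symm i) * cc (finProdFinEquiv.symm j) *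
          φ ((q (finProdFinEquiv.symm i)).1 - (q (finProdFinEquiv.symm j)).1)
            ((q (finProdFinEquiv.symm i)).2 - (q (finProdFinEquiv.symm j)).2)) =
        ∑ x : Fin N × Fin M, ∑ y : Fin N × Fin M,
          cc x * cc y * φ ((q x).1 - (q y).1) ((q x).2 - (q y).2) := by
      refine Fintype.sum_equiv finProdFinEquiv.symm _ _ (fun i => ?_)
      exact Fintype.sum_equiv finProdFinEquiv.symm _ _ (fun j => rfl)
    rw [hconv] at h
    refine le_trans h (le_of_eq ?_)
    rw [Fintype.sum_prod_type]
    have step1 : ∀ i : Fin N, ∀ m : Fin M,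
        (∑ y : Fin N × Fin M, cc (i, m) * cc y * φ ((q (i, m)).1 - (q y).1)
          ((q (i, m)).2 - (q y).2)) =
        ∑ j : Fin N, ∑ m' : Fin M, c i * c j *
          φ (θ i + 2*π*((m : ℕ) : ℝ) - (θ j + 2*π*((m' : ℕ) : ℝ))) (t i - t j) := by
      intro i m
      rw [Fintype.sum_prod_type]
    simp only [step1]
    -- swap inner sums and apply counting
    have step2 : ∀ i : Fin N,
        (∑ m : Fin M, ∑ j : Fin N, ∑ m' : Fin M, c i * c j *
          φ (θ i + 2*π*((m : ℕ) : ℝ) - (θ j + 2*π*((m' : ℕ) : ℝ))) (t i - t j)) =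
        ∑ j : Fin N, ((M : ℝ) * (c i * c j * φ (θ i - θ j) (t i - t j)) +
          ((M - 1 : ℕ) : ℝ) * (c i * c j *
            (φ (θ i - θ j + 2*π) (t i - t j) + φ (θ i - θ j - 2*π) (t i - t j)))) := by
      intro i
      rw [Finset.sum_comm]
      refine Finset.sum_congr rfl (fun j _ => ?_)
      have harg : ∀ m m' : Fin M,
          φ (θ i + 2*π*((m : ℕ) : ℝ) - (θ j + 2*π*((m' : ℕ) : ℝ))) (t i - t j) =
          (fun k : ℤ => φ (θ i - θ j + 2*π*(k : ℝ)) (t i - t j)) ((m : ℤ) - (m' : ℤ)) := by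
        intro m m'
        simp only []
        congr 1
        push_cast
        ring
      calc (∑ m : Fin M, ∑ m' : Fin M, c i * c j *
            φ (θ i + 2*π*((m : ℕ) : ℝ) - (θ j + 2*π*((m' : ℕ) : ℝ))) (t i - t j))
          = c i * c j * ∑ m : Fin M, ∑ m' : Fin M,
            (fun k : ℤ => φ (θ i - θ j + 2*π*(k : ℝ)) (t i - t j)) ((m : ℤ) - (m' : ℤ)) := by
            rw [Finset.mul_sum]
            refine Finset.sum_congr rfl (fun m _ => ?_)
            rw [Finset.mul_sum]
            exact Finset.sum_congr rfl (fun m' _ => by rw [harg m m'])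
        _ = c i * c j * ((M : ℝ) * φ (θ i - θ j + 2*π*((0:ℤ) : ℝ)) (t i - t j) +
            ((M - 1 : ℕ) : ℝ) * (φ (θ i - θ j + 2*π*((1:ℤ) : ℝ)) (t i - t j) +
              φ (θ i - θ j + 2*π*((-1:ℤ) : ℝ)) (t i - t j))) := by
            rw [count_lem _ (hg0 i j) M]
        _ = (M : ℝ) * (c i * c j * φ (θ i - θ j) (t i - t j)) +
            ((M - 1 : ℕ) : ℝ) * (c i * c j *
              (φ (θ i - θ j + 2*π) (t i - t j) + φ (θ i - θ j - 2*π) (t i - t j))) := by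
            rw [show θ i - θ j + 2*π*(((0:ℤ)) : ℝ) = θ i - θ j by push_cast; ring,
                show θ i - θ j + 2*π*(((1:ℤ)) : ℝ) = θ i - θ j + 2*π by push_cast; ring,
                show θ i - θ j + 2*π*(((-1:ℤ)) : ℝ) = θ i - θ j - 2*π by push_cast; ring]
            ring
    simp only [step2]
    rw [hS0, hS1]
    simp only [Finset.sum_add_distrib, Finset.mul_sum]
  -- conclude by taking M → ∞
  by_contra hneg
  push_neg at hneg
  set ε : ℝ := -(S0 + S1) with hε
  have hεpos : 0 < ε := by rw [hε]; linarith
  obtain ⟨n, hn⟩ := exists_nat_gt (S0 / ε)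
  have hbound := hM (n + 1)
  have hcast : (((n + 1 : ℕ) - 1 : ℕ) : ℝ) = (n : ℝ) := by norm_num
  rw [hcast] at hbound
  have hS0lt : S0 < (n : ℝ) * ε := by
    rw [div_lt_iff₀ hεpos] at hn
    linarith
  have : ((n + 1 : ℕ) : ℝ) * S0 + (n : ℝ) * S1 = (n : ℝ) * (S0 + S1) + S0 := by
    push_cast; ring
  rw [this] at hbound
  have : (n : ℝ) * (S0 + S1) = -((n : ℝ) * ε) := by rw [hε]; ring
  linarith [hbound, this ▸ hbound]
end

section
/- Let φ : ℝ × ℝ → ℝ be a continuous function, symmetric in the first argument (φ(−x,u) = φ(x,u)), such that the kernel ((x₁,u₁),(x₂,u₂)) ↦ φ(x₁ − x₂, u₁ − u₂) is positive definite on ℝ × ℝ, and such that φ(x,u) = 0 whenever |x| ≥ π, for all u ∈ ℝ. Then for every natural number n, the function b_n(u) = (1/π)·∫_{−∞}^{∞} cos(n·x)·φ(x,u) dx is a continuous positive definite function on ℝ, i.e., the kernel (u₁,u₂) ↦ b_n(u₁ − u₂) is positive definite on ℝ. -/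
open scoped RealInnerProductSpace

open MeasureTheory

section helpers

open intervalIntegral

lemma pd_grid {φ : ℝ → ℝ → ℝ}
    (hpd : IsPosDefKernel (fun p q : ℝ × ℝ => φ (p.1 - q.1) (p.2 - q.2)))
    {N : ℕ} (u : Fin N → ℝ) (c : Fin N → ℝ) (m : ℕ) (a : ℕ → ℝ) (w : ℝ → ℝ) :
    0 ≤ ∑ k ∈ Finset.range m, ∑ l ∈ Finset.range m, ∑ i : Fin N, ∑ j : Fin N,
      (c i * w (a k)) * (c j * w (a l)) * φ (a k - a l) (u i - u j) := by
  set e := (finProdFinEquiv : Fin m × Fin N ≃ Fin (m * N)) with he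
  have h := hpd (m * N)
      (fun q => ((a ((e.symm q).1 : ℕ), u (e.symm q).2) : ℝ × ℝ))
      (fun q => c (e.symm q).2 * w (a ((e.symm q).1 : ℕ)))
  have key : ∀ f : Fin (m*N) → Fin (m*N) → ℝ,
      ∑ q : Fin (m*N), ∑ q' : Fin (m*N), f q q'
        = ∑ p : Fin m × Fin N, ∑ p' : Fin m × Fin N, f (e p) (e p') := by
    intro f
    rw [← Equiv.sum_comp e (fun q => ∑ q', f q q')]
    exact Finset.sum_congr rfl fun p _ => (Equiv.sum_comp e _).symm
  rw [key] at h
  simp only [Equiv.symm_apply_apply] at h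
  refine le_of_le_of_eq h ?_
  rw [Fintype.sum_prod_type, ← Fin.sum_univ_eq_sum_range (fun k =>
      ∑ l ∈ Finset.range m, ∑ i : Fin N, ∑ j : Fin N,
        (c i * w (a k)) * (c j * w (a l)) * φ (a k - a l) (u i - u j)) m]
  refine Finset.sum_congr rfl fun k _ => ?_
  simp only [Fintype.sum_prod_type]
  rw [← Fin.sum_univ_eq_sum_range (fun l => ∑ i : Fin N, ∑ j : Fin N,
        (c i * w (a ↑k)) * (c j * w (a l)) * φ (a ↑k - a l) (u i - u j)) m]
  exact Finset.sum_comm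

lemma grid_approx (f : ℝ → ℝ → ℝ) (hf : Continuous (Function.uncurry f))
    {L : ℝ} (hL : 0 < L) {ε : ℝ} (hε : 0 < ε) :
    ∃ m : ℕ, 0 < m ∧
      |(∫ x in (-L)..L, ∫ y in (-L)..L, f x y) -
        ∑ k ∈ Finset.range m, ∑ l ∈ Finset.range m,
          (2*L/m) * ((2*L/m) * f (-L + k*(2*L/m)) (-L + l*(2*L/m)))| ≤ ε * (2*L)^2 := by
  have hK : IsCompact (Set.Icc (-L) L ×ˢ Set.Icc (-L) L) := isCompact_Icc.prod isCompact_Icc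
  have hUC := hK.uniformContinuousOn_of_continuous hf.continuousOn
  rw [Metric.uniformContinuousOn_iff] at hUC
  obtain ⟨δ, hδ, hδ'⟩ := hUC ε hε
  obtain ⟨m, hm⟩ := exists_nat_gt (max 1 (2*L/δ))
  have hm1 : (1:ℝ) < m := lt_of_le_of_lt (le_max_left _ _) hm
  have hm0 : (0:ℝ) < m := by linarith
  have hmpos : 0 < m := by exact_mod_cast hm0
  refine ⟨m, hmpos, ?_⟩
  set Δ : ℝ := 2*L/(m:ℝ) with hΔdef
  have hΔpos : 0 < Δ := by positivity
  have hmΔ : (m:ℝ) * Δ = 2*L := by rw [hΔdef]; field_simp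
  have hΔδ : Δ < δ := by
    have h2 : 2*L/δ < m := lt_of_le_of_lt (le_max_right _ _) hm
    rw [div_lt_iff₀ hδ] at h2
    rw [hΔdef, div_lt_iff₀ hm0]
    linarith
  set a : ℕ → ℝ := fun k => -L + k*Δ with ha
  have ha0 : a 0 = -L := by simp [ha]
  have ham : a m = L := by
    simp only [ha]; rw [hmΔ]; ring
  have hstep : ∀ k : ℕ, a (k+1) - a k = Δ := by
    intro k; simp only [ha]; push_cast; ring
  have hale : ∀ k : ℕ, a k ≤ a (k+1) := fun k => by have := hstep k; linarith
  have hmem : ∀ k : ℕ, k ≤ m → a k ∈ Set.Icc (-L) L := by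
    intro k hk
    have hk' : (k:ℝ) ≤ m := by exact_mod_cast hk
    have h1 : 0 ≤ (k:ℝ)*Δ := by positivity
    have h2 : (k:ℝ)*Δ ≤ (m:ℝ)*Δ := by nlinarith
    constructor <;> simp only [ha] <;> nlinarith
  -- continuity facts
  have hFcell : ∀ c d : ℝ, Continuous fun x => ∫ y in c..d, f x y :=
    fun c d => continuous_parametric_intervalIntegral_of_continuous' hf c d
  -- splitting
  have hsplit_outer :
      (∫ x in (-L)..L, ∫ y in (-L)..L, f x y)
        = ∑ k ∈ Finset.range m, ∫ x in a k..a (k+1), ∫ y in (-L)..L, f x y := by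
    have := sum_integral_adjacent_intervals (μ := volume)
      (f := fun x => ∫ y in (-L)..L, f x y) (a := a) (n := m)
      (fun k _ => ((hFcell _ _).intervalIntegrable _ _))
    rw [ha0, ham] at this
    exact this.symm
  have hsplit_inner : ∀ x : ℝ,
      (∫ y in (-L)..L, f x y) = ∑ l ∈ Finset.range m, ∫ y in a l..a (l+1), f x y := by
    intro x
    have hfy : Continuous (f x) := hf.comp (Continuous.prodMk_right x)
    have := sum_integral_adjacent_intervals (μ := volume)
      (f := f x) (a := a) (n := m) (fun k _ => hfy.intervalIntegrable _ _)
    rw [ha0, ham] at this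
    exact this.symm
  have hI : (∫ x in (-L)..L, ∫ y in (-L)..L, f x y)
      = ∑ k ∈ Finset.range m, ∑ l ∈ Finset.range m,
          ∫ x in a k..a (k+1), ∫ y in a l..a (l+1), f x y := by
    rw [hsplit_outer]
    refine Finset.sum_congr rfl fun k _ => ?_
    rw [integral_congr (g := fun x => ∑ l ∈ Finset.range m, ∫ y in a l..a (l+1), f x y)
      (fun x _ => hsplit_inner x)]
    exact intervalIntegral.integral_finset_sum (fun l _ => ((hFcell _ _).intervalIntegrable _ _))
  -- cell estimate
  have hcell : ∀ k ∈ Finset.range m, ∀ l ∈ Finset.range m,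
      |(∫ x in a k..a (k+1), ∫ y in a l..a (l+1), f x y) - Δ * (Δ * f (a k) (a l))|
        ≤ ε * (Δ * Δ) := by
    intro k hk l hl
    rw [Finset.mem_range] at hk hl
    have hkIcc : ∀ x ∈ Set.uIcc (a k) (a (k+1)), x ∈ Set.Icc (-L) L := by
      intro x hx
      rw [Set.uIcc_of_le (hale k)] at hx
      have h1 := hmem k hk.le
      have h2 := hmem (k+1) hk
      exact ⟨le_trans h1.1 hx.1, le_trans hx.2 h2.2⟩
    have hlIcc : ∀ y ∈ Set.uIcc (a l) (a (l+1)), y ∈ Set.Icc (-L) L := by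
      intro y hy
      rw [Set.uIcc_of_le (hale l)] at hy
      have h1 := hmem l hl.le
      have h2 := hmem (l+1) hl
      exact ⟨le_trans h1.1 hy.1, le_trans hy.2 h2.2⟩
    have hbound : ∀ x ∈ Set.uIcc (a k) (a (k+1)), ∀ y ∈ Set.uIcc (a l) (a (l+1)),
        |f x y - f (a k) (a l)| ≤ ε := by
      intro x hx y hy
      have hxk : |x - a k| ≤ Δ := by
        rw [Set.uIcc_of_le (hale k)] at hx
        have := hstep k
        rw [abs_le]; constructor <;> [linarith [hx.1]; linarith [hx.2]]
      have hyl : |y - a l| ≤ Δ := by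
        rw [Set.uIcc_of_le (hale l)] at hy
        have := hstep l
        rw [abs_le]; constructor <;> [linarith [hy.1]; linarith [hy.2]]
      have hdist : dist ((x, y) : ℝ × ℝ) ((a k, a l) : ℝ × ℝ) < δ := by
        rw [Prod.dist_eq]
        simp only [Real.dist_eq]
        exact lt_of_le_of_lt (max_le hxk hyl) hΔδ
      have hmem1 : ((x, y) : ℝ × ℝ) ∈ Set.Icc (-L) L ×ˢ Set.Icc (-L) L :=
        ⟨hkIcc x hx, hlIcc y hy⟩
      have hmem2 : ((a k, a l) : ℝ × ℝ) ∈ Set.Icc (-L) L ×ˢ Set.Icc (-L) L :=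
        ⟨hmem k hk.le, hmem l hl.le⟩
      have := hδ' _ hmem1 _ hmem2 hdist
      rw [Real.dist_eq] at this
      exact this.le
    -- rewrite the constant as a double integral
    have hconst : Δ * (Δ * f (a k) (a l))
        = ∫ x in a k..a (k+1), ∫ y in a l..a (l+1), f (a k) (a l) := by
      rw [intervalIntegral.integral_const, intervalIntegral.integral_const,
        hstep, hstep, smul_eq_mul, smul_eq_mul]
    rw [hconst]
    have hint1 : IntervalIntegrable (fun x => ∫ y in a l..a (l+1), f x y) volume
        (a k) (a (k+1)) := (hFcell _ _).intervalIntegrable _ _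
    have hint2 : IntervalIntegrable (fun _ : ℝ => ∫ y in a l..a (l+1), f (a k) (a l)) volume
        (a k) (a (k+1)) := intervalIntegrable_const
    rw [← integral_sub hint1 hint2]
    have key : ∀ x ∈ Set.uIoc (a k) (a (k+1)),
        ‖(∫ y in a l..a (l+1), f x y) - ∫ y in a l..a (l+1), f (a k) (a l)‖ ≤ ε * Δ := by
      intro x hx
      have hx' : x ∈ Set.uIcc (a k) (a (k+1)) := Set.uIoc_subset_uIcc hx
      have hfy : Continuous (f x) := hf.comp (Continuous.prodMk_right x)
      rw [← integral_sub (hfy.intervalIntegrable _ _) intervalIntegrable_const]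
      have := norm_integral_le_of_norm_le_const (C := ε) (a := a l) (b := a (l+1))
        (f := fun y => f x y - f (a k) (a l)) (fun y hy => by
          rw [Real.norm_eq_abs]
          exact hbound x hx' y (Set.uIoc_subset_uIcc hy))
      calc ‖∫ y in a l..a (l+1), (f x y - f (a k) (a l))‖ ≤ ε * |a (l+1) - a l| := this
        _ = ε * Δ := by rw [hstep l, abs_of_pos hΔpos]
    have := norm_integral_le_of_norm_le_const key
    rw [hstep k, abs_of_pos hΔpos] at this
    rw [← Real.norm_eq_abs]
    calc ‖_‖ ≤ ε * Δ * Δ := this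
      _ = ε * (Δ * Δ) := by ring
  -- conclude
  have hS : ∀ k ∈ Finset.range m, ∀ l ∈ Finset.range m,
      (2*L/↑m) * ((2*L/↑m) * f (-L + ↑k*(2*L/↑m)) (-L + ↑l*(2*L/↑m)))
        = Δ * (Δ * f (a k) (a l)) := fun k _ l _ => rfl
  rw [hI]
  rw [Finset.sum_congr rfl (fun k hk => Finset.sum_congr rfl (fun l hl => hS k hk l hl))]
  rw [← Finset.sum_sub_distrib]
  calc |∑ k ∈ Finset.range m, ((∑ l ∈ Finset.range m, ∫ x in a k..a (k+1), ∫ y in a l..a (l+1), f x y) - ∑ l ∈ Finset.range m, Δ * (Δ * f (a k) (a l)))|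
      ≤ ∑ k ∈ Finset.range m, |(∑ l ∈ Finset.range m, ∫ x in a k..a (k+1), ∫ y in a l..a (l+1), f x y) - ∑ l ∈ Finset.range m, Δ * (Δ * f (a k) (a l))| :=
        Finset.abs_sum_le_sum_abs _ _
    _ ≤ ∑ k ∈ Finset.range m, (ε * (Δ * Δ) * m) := by
        refine Finset.sum_le_sum fun k hk => ?_
        rw [← Finset.sum_sub_distrib]
        calc |∑ l ∈ Finset.range m, ((∫ x in a k..a (k+1), ∫ y in a l..a (l+1), f x y) - Δ * (Δ * f (a k) (a l)))|
            ≤ ∑ l ∈ Finset.range m, |(∫ x in a k..a (k+1), ∫ y in a l..a (l+1), f x y) - Δ * (Δ * f (a k) (a l))| := Finset.abs_sum_le_sum_abs _ _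
          _ ≤ ∑ l ∈ Finset.range m, ε * (Δ * Δ) := Finset.sum_le_sum fun l hl => hcell k hk l hl
          _ = ε * (Δ * Δ) * m := by rw [Finset.sum_const, Finset.card_range]; ring
    _ = ε * (2*L)^2 := by
        rw [Finset.sum_const, Finset.card_range]
        simp only [nsmul_eq_mul]
        linear_combination ε * (↑m * Δ + 2 * L) * hmΔ

end helpers

set_option maxHeartbeats 800000 in
/-- The cosine Fourier coefficients `b_n(u) = (1/π) ∫ cos(n x) φ(x,u) dx` of a continuous,
symmetric-in-the-first-argument, positive definite function on `ℝ × ℝ` that vanishes for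
`|x| ≥ π` are continuous positive definite functions on `ℝ`. -/
theorem fourier_coefficients_posdef
    (φ : ℝ → ℝ → ℝ) (hcont : Continuous (Function.uncurry φ))
    (hsymm : ∀ x u : ℝ, φ (-x) u = φ x u)
    (hpd : IsPosDefKernel (fun p q : ℝ × ℝ => φ (p.1 - q.1) (p.2 - q.2)))
    (hsupp : ∀ x u : ℝ, Real.pi ≤ |x| → φ x u = 0)
    (n : ℕ) :
    Continuous (fun u : ℝ => (1 / Real.pi) * ∫ x : ℝ, Real.cos (n * x) * φ x u) ∧
      IsPosDefKernel (fun u₁ u₂ : ℝ =>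
        (1 / Real.pi) * ∫ x : ℝ, Real.cos (n * x) * φ x (u₁ - u₂)) := by
  have hπ : (0:ℝ) < Real.pi := Real.pi_pos
  set g : ℝ → ℝ → ℝ := fun t s => Real.cos (n * t) * φ t s with hg
  clear_value g
  have hgc : Continuous (Function.uncurry g) := by
    rw [hg]
    exact (Real.continuous_cos.comp (continuous_const.mul continuous_fst)).mul hcont
  have hgcy : ∀ s, Continuous fun t => g t s :=
    fun s => hgc.comp (continuous_id.prodMk continuous_const)
  have hsupp' : ∀ s, Function.support (fun t => g t s) ⊆ Set.Ioo (-Real.pi) Real.pi := by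
    intro s t ht
    by_contra hmem
    simp only [Set.mem_Ioo, not_and_or, not_lt] at hmem
    have habs : Real.pi ≤ |t| := by
      rcases hmem with h | h
      · rw [le_abs]; right; linarith
      · rw [le_abs]; left; exact h
    exact ht (by simp [hg, hsupp t s habs])
  have hgint : ∀ s, Integrable (fun t => g t s) := by
    intro s
    apply (hgcy s).integrable_of_hasCompactSupport
    apply HasCompactSupport.intro (isCompact_Icc (a := -Real.pi) (b := Real.pi))
    intro t ht
    by_contra h0
    exact ht (Set.Ioo_subset_Icc_self (hsupp' s h0))
  constructor
  · -- continuity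
    apply continuous_const.mul
    have hgoal : (fun u : ℝ => ∫ x : ℝ, Real.cos (n * x) * φ x u)
        = fun u => ∫ x, g x u := by
      funext u; rw [hg]
    rw [hgoal]
    refine continuous_iff_continuousAt.2 fun u₀ => ?_
    have hK : IsCompact (Set.Icc (-Real.pi) Real.pi ×ˢ Set.Icc (u₀ - 1) (u₀ + 1)) :=
      isCompact_Icc.prod isCompact_Icc
    obtain ⟨M, hM⟩ := hK.exists_bound_of_continuousOn hcont.continuousOn
    apply MeasureTheory.continuousAt_of_dominated
      (bound := Set.indicator (Set.Icc (-Real.pi) Real.pi) (fun _ => M))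
    · exact Filter.Eventually.of_forall fun u => (hgcy u).aestronglyMeasurable
    · have hIcc : Set.Icc (u₀ - 1) (u₀ + 1) ∈ nhds u₀ :=
        Icc_mem_nhds (by linarith) (by linarith)
      filter_upwards [hIcc] with u hu
      refine MeasureTheory.ae_of_all _ fun x => ?_
      by_cases hx : x ∈ Set.Icc (-Real.pi) Real.pi
      · rw [Set.indicator_of_mem hx]
        have h1 := hM (x, u) ⟨hx, hu⟩
        rw [Real.norm_eq_abs] at h1 ⊢
        calc |g x u| = |Real.cos (n*x)| * |φ x u| := by rw [hg]; exact abs_mul _ _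
          _ ≤ 1 * |φ x u| :=
              mul_le_mul_of_nonneg_right (Real.abs_cos_le_one _) (abs_nonneg _)
          _ = |φ x u| := one_mul _
          _ ≤ M := h1
      · rw [Set.indicator_of_notMem hx]
        have h0 : g x u = 0 := by
          by_contra h0
          exact hx (Set.Ioo_subset_Icc_self (hsupp' u h0))
        simp [h0]
    · rw [integrable_indicator_iff measurableSet_Icc]
      apply (integrableOn_const_iff (by finiteness)).2
      right
      exact measure_Icc_lt_top
    · exact MeasureTheory.ae_of_all _ fun x =>
        ((hgc.comp (continuous_const.prodMk continuous_id)).continuousAt)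
  · -- positive definiteness
    intro N u c
    set C : ℝ → ℝ := fun s => ∫ t, |g t s| with hC
    have hC0 : ∀ s, 0 ≤ C s := fun s => integral_nonneg fun t => abs_nonneg _
    have hb_bound : ∀ s A B : ℝ, |∫ t in A..B, g t s| ≤ C s := by
      have key : ∀ s A B : ℝ, A ≤ B → |∫ t in A..B, g t s| ≤ C s := by
        intro s A B hAB
        rw [intervalIntegral.integral_of_le hAB, ← Real.norm_eq_abs]
        calc ‖∫ t in Set.Ioc A B, g t s‖ ≤ ∫ t in Set.Ioc A B, ‖g t s‖ :=
              MeasureTheory.norm_integral_le_integral_norm _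
          _ ≤ ∫ t, ‖g t s‖ := setIntegral_le_integral (hgint s).norm
              (MeasureTheory.ae_of_all _ fun t => norm_nonneg _)
          _ = C s := by simp [hC, Real.norm_eq_abs]
      intro s A B
      rcases le_total A B with h | h
      · exact key s A B h
      · rw [intervalIntegral.integral_symm, abs_neg]
        exact key s B A h
    -- claim 1 : boundary estimate for the truncated double integral
    have claim1 : ∀ s : ℝ, ∀ L : ℝ, Real.pi < L →
        |(∫ x in (-L)..L, ∫ y in (-L)..L, g (x-y) s) - 2*(L-Real.pi) * (∫ t, g t s)|
          ≤ 2*(Real.pi * C s) := by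
      intro s L hL
      have hinner : ∀ x : ℝ, (∫ y in (-L)..L, g (x-y) s) = ∫ t in (x-L)..(x+L), g t s := by
        intro x
        have h := intervalIntegral.integral_comp_sub_left (a := -L) (b := L)
          (fun t => g t s) x
        simpa [sub_neg_eq_add] using h
      have hHcont : Continuous fun x => ∫ t in (x-L)..(x+L), g t s := by
        have hP : Continuous fun r => ∫ t in (0:ℝ)..r, g t s :=
          intervalIntegral.continuous_primitive (fun _ _ => (hgint s).intervalIntegrable) 0
        have hfe : (fun x => ∫ t in (x-L)..(x+L), g t s)
            = fun x => (∫ t in (0:ℝ)..(x+L), g t s) - ∫ t in (0:ℝ)..(x-L), g t s := by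
          funext x
          have h2 := intervalIntegral.integral_add_adjacent_intervals
            (a := (0:ℝ)) (b := x - L) (c := x + L)
            ((hgint s).intervalIntegrable) ((hgint s).intervalIntegrable)
          linarith
        rw [hfe]
        exact (hP.comp (continuous_id.add continuous_const)).sub
          (hP.comp (continuous_id.sub continuous_const))
      have hHval : ∀ x : ℝ, |x| ≤ L - Real.pi →
          (∫ t in (x-L)..(x+L), g t s) = ∫ t, g t s := by
        intro x hx
        apply intervalIntegral.integral_eq_integral_of_support_subset
        intro t ht
        have h2 := hsupp' s ht
        rw [abs_le] at hx
        exact ⟨by linarith [h2.1], by linarith [h2.2]⟩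
      have hi1 : IntervalIntegrable (fun x => ∫ t in (x-L)..(x+L), g t s) volume
          (-L) (-(L-Real.pi)) := hHcont.intervalIntegrable _ _
      have hi2 : IntervalIntegrable (fun x => ∫ t in (x-L)..(x+L), g t s) volume
          (-(L-Real.pi)) (L-Real.pi) := hHcont.intervalIntegrable _ _
      have hi3 : IntervalIntegrable (fun x => ∫ t in (x-L)..(x+L), g t s) volume
          (L-Real.pi) L := hHcont.intervalIntegrable _ _
      have hsplit : (∫ x in (-L)..L, ∫ t in (x-L)..(x+L), g t s)
          = (∫ x in (-L)..(-(L-Real.pi)), ∫ t in (x-L)..(x+L), g t s)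
            + ((∫ x in (-(L-Real.pi))..(L-Real.pi), ∫ t in (x-L)..(x+L), g t s)
              + (∫ x in (L-Real.pi)..L, ∫ t in (x-L)..(x+L), g t s)) := by
        rw [intervalIntegral.integral_add_adjacent_intervals hi2 hi3,
          intervalIntegral.integral_add_adjacent_intervals hi1
            (hHcont.intervalIntegrable _ _)]
      have hmid : (∫ x in (-(L-Real.pi))..(L-Real.pi), ∫ t in (x-L)..(x+L), g t s)
          = 2*(L-Real.pi) * (∫ t, g t s) := by
        rw [intervalIntegral.integral_congr (g := fun _ => ∫ t, g t s) ?_]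
        · rw [intervalIntegral.integral_const, smul_eq_mul]; ring
        · intro x hx
          rw [Set.uIcc_of_le (by linarith)] at hx
          exact hHval x (abs_le.2 ⟨by linarith [hx.1], by linarith [hx.2]⟩)
      have hbd1 : |∫ x in (-L)..(-(L-Real.pi)), ∫ t in (x-L)..(x+L), g t s|
          ≤ Real.pi * C s := by
        have h := intervalIntegral.norm_integral_le_of_norm_le_const (C := C s)
          (a := -L) (b := -(L-Real.pi)) (f := fun x => ∫ t in (x-L)..(x+L), g t s)
          (fun x _ => by rw [Real.norm_eq_abs]; exact hb_bound s _ _)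
        rw [Real.norm_eq_abs] at h
        refine le_trans h (le_of_eq ?_)
        rw [show (-(L-Real.pi)) - (-L) = Real.pi by ring, abs_of_pos hπ]
        ring
      have hbd2 : |∫ x in (L-Real.pi)..L, ∫ t in (x-L)..(x+L), g t s|
          ≤ Real.pi * C s := by
        have h := intervalIntegral.norm_integral_le_of_norm_le_const (C := C s)
          (a := L-Real.pi) (b := L) (f := fun x => ∫ t in (x-L)..(x+L), g t s)
          (fun x _ => by rw [Real.norm_eq_abs]; exact hb_bound s _ _)
        rw [Real.norm_eq_abs] at h
        refine le_trans h (le_of_eq ?_)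
        rw [show L - (L-Real.pi) = Real.pi by ring, abs_of_pos hπ]
        ring
      have hrw : (∫ x in (-L)..L, ∫ y in (-L)..L, g (x-y) s)
          = ∫ x in (-L)..L, ∫ t in (x-L)..(x+L), g t s :=
        intervalIntegral.integral_congr (fun x _ => hinner x)
      rw [hrw, hsplit, hmid]
      have hring : ∀ a m b : ℝ, a + (m + b) - m = a + b := fun _ _ _ => by ring
      rw [hring]
      exact le_trans (abs_add_le _ _) (by linarith [hbd1, hbd2])
    -- reduce the goal
    have hgoal : (∑ i : Fin N, ∑ j : Fin N,
          c i * c j * ((1/Real.pi) * ∫ x : ℝ, Real.cos (n * x) * φ x (u i - u j)))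
        = (1/Real.pi) * ∑ i : Fin N, ∑ j : Fin N,
            c i * c j * (∫ t, g t (u i - u j)) := by
      rw [Finset.mul_sum]
      refine Finset.sum_congr rfl fun i _ => ?_
      rw [Finset.mul_sum]
      refine Finset.sum_congr rfl fun j _ => ?_
      simp only [hg]
      ring
    have hQ : 0 ≤ ∑ i : Fin N, ∑ j : Fin N, c i * c j * (∫ t, g t (u i - u j)) := by
      set Q' : ℝ := ∑ i : Fin N, ∑ j : Fin N, c i * c j * (∫ t, g t (u i - u j)) with hQ'
      set B : ℝ := ∑ i : Fin N, ∑ j : Fin N,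
        |c i * c j| * (2*(Real.pi * C (u i - u j))) with hB
      have hB0 : 0 ≤ B := by
        rw [hB]
        refine Finset.sum_nonneg fun i _ => Finset.sum_nonneg fun j _ => ?_
        have := hC0 (u i - u j)
        have h2 : (0:ℝ) ≤ 2*(Real.pi * C (u i - u j)) := by nlinarith
        exact mul_nonneg (abs_nonneg _) h2
      set G : ℝ → ℝ → ℝ := fun x y => ∑ i : Fin N, ∑ j : Fin N,
        c i * c j * g (x - y) (u i - u j) with hGdef
      clear_value G
      have hGcont : Continuous (Function.uncurry G) := by
        rw [hGdef]
        show Continuous fun p : ℝ × ℝ => ∑ i : Fin N, ∑ j : Fin N,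
          c i * c j * g (p.1 - p.2) (u i - u j)
        refine continuous_finset_sum _ fun i _ => continuous_finset_sum _ fun j _ => ?_
        exact continuous_const.mul
          (hgc.comp ((continuous_fst.sub continuous_snd).prodMk continuous_const))
      have hGsplit : ∀ x y : ℝ, G x y
          = (∑ i : Fin N, ∑ j : Fin N, (c i * (Real.cos (n*x))) * (c j * (Real.cos (n*y)))
              * φ (x-y) (u i - u j))
            + ∑ i : Fin N, ∑ j : Fin N, (c i * (Real.sin (n*x))) * (c j * (Real.sin (n*y)))
              * φ (x-y) (u i - u j) := by
        intro x y
        rw [hGdef, ← Finset.sum_add_distrib]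
        refine Finset.sum_congr rfl fun i _ => ?_
        rw [← Finset.sum_add_distrib]
        refine Finset.sum_congr rfl fun j _ => ?_
        simp only [hg]
        rw [show (n:ℝ)*(x-y) = n*x - n*y by ring, Real.cos_sub]
        ring
      -- nonnegativity of the truncated double integral
      have hInonneg : ∀ L : ℝ, 0 < L → 0 ≤ ∫ x in (-L)..L, ∫ y in (-L)..L, G x y := by
        intro L hL0
        by_contra hneg
        push_neg at hneg
        set I : ℝ := ∫ x in (-L)..L, ∫ y in (-L)..L, G x y with hIdef
        have hI0 : I < 0 := hneg
        have hεpos : 0 < (-I) / (2*(2*L)^2) := div_pos (by linarith) (by positivity)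
        obtain ⟨m, hm, happ⟩ := grid_approx G hGcont hL0 hεpos
        have hterm : ∀ x y : ℝ, (2*L/(m:ℝ)) * ((2*L/(m:ℝ)) * G x y)
            = (∑ i : Fin N, ∑ j : Fin N,
                (c i * ((2*L/(m:ℝ)) * Real.cos (n*x))) * (c j * ((2*L/(m:ℝ)) * Real.cos (n*y)))
                  * φ (x-y) (u i - u j))
              + ∑ i : Fin N, ∑ j : Fin N,
                (c i * ((2*L/(m:ℝ)) * Real.sin (n*x))) * (c j * ((2*L/(m:ℝ)) * Real.sin (n*y)))
                  * φ (x-y) (u i - u j) := by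
          intro x y
          rw [hGsplit, mul_add, mul_add]
          congr 1
          · simp only [Finset.mul_sum]
            exact Finset.sum_congr rfl fun i _ => Finset.sum_congr rfl fun j _ => by ring
          · simp only [Finset.mul_sum]
            exact Finset.sum_congr rfl fun i _ => Finset.sum_congr rfl fun j _ => by ring
        have hSpos : 0 ≤ ∑ k ∈ Finset.range m, ∑ l ∈ Finset.range m,
            (2*L/(m:ℝ)) * ((2*L/(m:ℝ)) * G (-L + k*(2*L/(m:ℝ))) (-L + l*(2*L/(m:ℝ)))) := by
          rw [Finset.sum_congr rfl (fun k _ => Finset.sum_congr rfl (fun l _ => hterm _ _))]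
          simp only [Finset.sum_add_distrib]
          refine add_nonneg ?_ ?_
          · exact pd_grid hpd u c m (fun k => -L + k*(2*L/(m:ℝ)))
              (fun x => (2*L/(m:ℝ)) * Real.cos (n*x))
          · exact pd_grid hpd u c m (fun k => -L + k*(2*L/(m:ℝ)))
              (fun x => (2*L/(m:ℝ)) * Real.sin (n*x))
        have hval : ((-I) / (2*(2*L)^2)) * (2*L)^2 = -I/2 := by
          field_simp
        rw [hval] at happ
        have h1 := abs_le.1 happ
        linarith [h1.1, h1.2, hSpos]
      -- decomposition of the truncated double integral
      have hIdec : ∀ L : ℝ, Real.pi < L →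
          (∫ x in (-L)..L, ∫ y in (-L)..L, G x y)
            = ∑ i : Fin N, ∑ j : Fin N,
                c i * c j * (∫ x in (-L)..L, ∫ y in (-L)..L, g (x-y) (u i - u j)) := by
        intro L hL
        have hparam : ∀ s : ℝ, Continuous fun x => ∫ y in (-L)..L, g (x - y) s := by
          intro s
          apply intervalIntegral.continuous_parametric_intervalIntegral_of_continuous'
            (f := fun x y => g (x-y) s) ?_ (-L) L
          exact hgc.comp ((continuous_fst.sub continuous_snd).prodMk continuous_const)
        have hin : ∀ x : ℝ, (∫ y in (-L)..L, G x y)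
            = ∑ i : Fin N, ∑ j : Fin N, c i * c j * ∫ y in (-L)..L, g (x-y) (u i - u j) := by
          intro x
          simp only [hGdef]
          rw [intervalIntegral.integral_finset_sum]
          · refine Finset.sum_congr rfl fun i _ => ?_
            rw [intervalIntegral.integral_finset_sum]
            · exact Finset.sum_congr rfl fun j _ =>
                intervalIntegral.integral_const_mul _ _
            · intro j _
              exact (continuous_const.mul
                ((hgcy _).comp (continuous_const.sub continuous_id))).intervalIntegrable _ _
          · intro i _
            refine (continuous_finset_sum _ fun j _ => ?_).intervalIntegrable _ _
            exact continuous_const.mul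
              ((hgcy _).comp (continuous_const.sub continuous_id))
        rw [intervalIntegral.integral_congr (g := fun x => ∑ i : Fin N, ∑ j : Fin N,
          c i * c j * ∫ y in (-L)..L, g (x-y) (u i - u j)) (fun x _ => hin x)]
        rw [intervalIntegral.integral_finset_sum]
        · refine Finset.sum_congr rfl fun i _ => ?_
          rw [intervalIntegral.integral_finset_sum]
          · exact Finset.sum_congr rfl fun j _ =>
              intervalIntegral.integral_const_mul _ _
          · intro j _
            exact (continuous_const.mul (hparam _)).intervalIntegrable _ _
        · intro i _
          refine (continuous_finset_sum _ fun j _ => ?_).intervalIntegrable _ _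
          exact continuous_const.mul (hparam _)
      -- uniform bound on the deviation
      have hdiff : ∀ L : ℝ, Real.pi < L →
          |(∫ x in (-L)..L, ∫ y in (-L)..L, G x y) - 2*(L-Real.pi) * Q'| ≤ B := by
        intro L hL
        rw [hIdec L hL, hQ', Finset.mul_sum, ← Finset.sum_sub_distrib, hB]
        refine le_trans (Finset.abs_sum_le_sum_abs _ _) ?_
        refine Finset.sum_le_sum fun i _ => ?_
        rw [Finset.mul_sum, ← Finset.sum_sub_distrib]
        refine le_trans (Finset.abs_sum_le_sum_abs _ _) ?_
        refine Finset.sum_le_sum fun j _ => ?_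
        have h1 := claim1 (u i - u j) L hL
        rw [show c i * c j * (∫ x in (-L)..L, ∫ y in (-L)..L, g (x-y) (u i - u j))
              - 2*(L-Real.pi) * (c i * c j * (∫ t, g t (u i - u j)))
            = (c i * c j) * ((∫ x in (-L)..L, ∫ y in (-L)..L, g (x-y) (u i - u j))
              - 2*(L-Real.pi) * (∫ t, g t (u i - u j))) from by ring, abs_mul]
        exact mul_le_mul_of_nonneg_left h1 (abs_nonneg _)
      -- conclude
      by_contra hQneg
      push_neg at hQneg
      set L : ℝ := Real.pi + (B+1)/(-Q') with hLdef
      have hfrac : 0 < (B+1)/(-Q') := div_pos (by linarith) (by linarith)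
      have hL : Real.pi < L := by rw [hLdef]; linarith
      have h1 := hInonneg L (by linarith)
      have h2 := hdiff L hL
      have h3 : 2*(L - Real.pi) * Q' = -(2*(B+1)) := by
        have hQne : Q' ≠ 0 := by linarith
        have key : Q'/(-Q') = -1 := by rw [div_neg, div_self hQne]
        calc 2*(L-Real.pi)*Q' = 2*(B+1)*(Q'/(-Q')) := by rw [hLdef]; ring
          _ = -(2*(B+1)) := by rw [key]; ring
      rw [h3] at h2
      have h4 := abs_le.1 h2
      linarith [h4.1, h4.2]
    rw [hgoal]
    exact mul_nonneg (by positivity) hQ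
end
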